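/- If (x̄, ȳ) is a CAKKT point of the relaxed MPCaC problem viewed as a standard nonlinear program (with inequality constraints g(x) ≤ 0, θ(y) ≤ 0, −y ≤ 0, y − e ≤ 0 and equality constraints h(x) = 0, x_i y_i = 0 for all i), then (x̄, ȳ) is AW-stationary. -/

import Mathlib

open Filter Topology
open scoped Classical

noncomputable section

/-- `ℝⁿ` as a Euclidean space. -/
abbrev E (n : ℕ) : Type := EuclideanSpace ℝ (Fin n)

/-- The constraint function `θ(y) = n − α − eᵀ y` of the relaxed MPCaC problem. -/
def theta {n : ℕ} (α : ℕ) (y : E n) : ℝ := (n : ℝ) - (α : ℝ) - ∑ i, y i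

/-- Feasibility for the relaxed MPCaC problem:
`g(x) ≤ 0, h(x) = 0, θ(y) ≤ 0, xᵢ yᵢ = 0, 0 ≤ yᵢ ≤ 1`. -/
def relFeas {n m p : ℕ} (g : E n → Fin m → ℝ) (h : E n → Fin p → ℝ) (α : ℕ)
    (x y : E n) : Prop :=
  (∀ i, g x i ≤ 0) ∧ (∀ j, h x j = 0) ∧ theta α y ≤ 0 ∧
  (∀ i, x i * y i = 0) ∧ (∀ i, 0 ≤ y i ∧ y i ≤ 1)

/-- `∇f(x) + Σᵢ λᵍᵢ ∇gᵢ(x) + Σⱼ λʰⱼ ∇hⱼ(x)`. -/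
def gradLx {n m p : ℕ} (f : E n → ℝ) (g : E n → Fin m → ℝ) (h : E n → Fin p → ℝ)
    (x : E n) (lg : Fin m → ℝ) (lh : Fin p → ℝ) : E n :=
  gradient f x + ∑ i, lg i • gradient (fun z => g z i) x
    + ∑ j, lh j • gradient (fun z => h z j) x

/-- `i ∈ I_{0+}(x̄,ȳ) ∪ I_{01}(x̄,ȳ)`, i.e. `x̄ᵢ = 0` and (`0 < ȳᵢ < 1` or `ȳᵢ = 1`). -/
def inI0p01 {n : ℕ} (xb yb : E n) (i : Fin n) : Prop :=
  xb i = 0 ∧ ((0 < yb i ∧ yb i < 1) ∨ yb i = 1)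

/-- Admissibility of the index set `I`: `I_{0+} ∪ I_{01} ⊆ I ⊆ I_0`. -/
def idxOK {n : ℕ} (xb yb : E n) (I : Finset (Fin n)) : Prop :=
  (∀ i, inI0p01 xb yb i → i ∈ I) ∧ (∀ i ∈ I, xb i = 0)

/-- Feasibility for the tightened problem `TNLP_I(x̄,ȳ)`:
`g(x) ≤ 0, h(x) = 0, θ(y) ≤ 0, xᵢ = 0 (i ∈ I), −yᵢ ≤ 0 (i ∈ I_{0+} ∪ I_{01}),`
`−yᵢ = 0 (i ∈ I_{00} ∪ I_{±0}), y − e ≤ 0`. Note `I_{00} ∪ I_{±0} = {i | ȳᵢ = 0}`. -/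
def tnlpFeas {n m p : ℕ} (g : E n → Fin m → ℝ) (h : E n → Fin p → ℝ) (α : ℕ)
    (xb yb : E n) (I : Finset (Fin n)) (x y : E n) : Prop :=
  (∀ i, g x i ≤ 0) ∧ (∀ j, h x j = 0) ∧ theta α y ≤ 0 ∧
  (∀ i ∈ I, x i = 0) ∧
  (∀ i, inI0p01 xb yb i → -(y i) ≤ 0) ∧
  (∀ i, yb i = 0 → -(y i) = 0) ∧
  (∀ i, y i - 1 ≤ 0)

/-- `W_I`-stationarity for the relaxed MPCaC problem (Definition 2.9 of the paper). -/
def WStat {n m p : ℕ} (f : E n → ℝ) (g : E n → Fin m → ℝ) (h : E n → Fin p → ℝ)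
    (α : ℕ) (xb yb : E n) (I : Finset (Fin n)) : Prop :=
  ∃ (lg : Fin m → ℝ) (lh : Fin p → ℝ) (lθ : ℝ) (lG : Fin n → ℝ) (lH lH' : Fin n → ℝ),
    (∀ i, 0 ≤ lg i) ∧ 0 ≤ lθ ∧ (∀ i, 0 ≤ lH' i) ∧
    gradLx f g h xb lg lh + ∑ i ∈ I, lG i • EuclideanSpace.single i 1 = 0 ∧
    (∀ i, -lθ - lH i + lH' i = 0) ∧
    (∑ i, lg i * g xb i) = 0 ∧
    lθ * theta α yb = 0 ∧
    (∀ i, inI0p01 xb yb i → lH i = 0) ∧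
    (∑ i, lH' i * (yb i - 1)) = 0

/-- Approximate weak (`AW`) stationarity for the relaxed MPCaC problem
(Definition 3.1 of the paper). -/
def AWStat {n m p : ℕ} (f : E n → ℝ) (g : E n → Fin m → ℝ) (h : E n → Fin p → ℝ)
    (α : ℕ) (xb yb : E n) : Prop :=
  ∃ (x y : ℕ → E n) (lg : ℕ → Fin m → ℝ) (lh : ℕ → Fin p → ℝ) (lθ : ℕ → ℝ)
    (lG : ℕ → E n) (lH lH' : ℕ → Fin n → ℝ),
    (∀ k i, 0 ≤ lg k i) ∧ (∀ k, 0 ≤ lθ k) ∧ (∀ k i, 0 ≤ lH' k i) ∧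
    Tendsto x atTop (𝓝 xb) ∧ Tendsto y atTop (𝓝 yb) ∧
    Tendsto (fun k => gradLx f g h (x k) (lg k) (lh k) + lG k) atTop (𝓝 0) ∧
    Tendsto (fun k i => -(lθ k) - lH k i + lH' k i) atTop (𝓝 (0 : Fin n → ℝ)) ∧
    (∀ i, Tendsto (fun k => min (-(g (x k) i)) (lg k i)) atTop (𝓝 0)) ∧
    Tendsto (fun k => min (-(theta α (y k))) (lθ k)) atTop (𝓝 0) ∧
    (∀ i, Tendsto (fun k => min |x k i| |lG k i|) atTop (𝓝 0)) ∧
    (∀ i, Tendsto (fun k => min (y k i) |lH k i|) atTop (𝓝 0)) ∧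
    (∀ i, Tendsto (fun k => min (1 - y k i) (lH' k i)) atTop (𝓝 0))

/-- `(x̄,ȳ)` is a CAKKT point of the relaxed MPCaC problem viewed as a standard
NLP (inequality constraints `g(x) ≤ 0`, `θ(y) ≤ 0`, `−y ≤ 0`, `y − e ≤ 0`;
equality constraints `h(x) = 0`, `xᵢ yᵢ = 0`). Feasibility is not included. -/
def CAKKTrelaxed {n m p : ℕ} (f : E n → ℝ) (g : E n → Fin m → ℝ)
    (h : E n → Fin p → ℝ) (α : ℕ) (xb yb : E n) : Prop :=
  ∃ (x y : ℕ → E n) (lg : ℕ → Fin m → ℝ) (lh : ℕ → Fin p → ℝ) (lθ : ℕ → ℝ)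
    (μ : ℕ → Fin n → ℝ) (lH' : ℕ → Fin n → ℝ) (lξ : ℕ → Fin n → ℝ),
    (∀ k i, 0 ≤ lg k i) ∧ (∀ k, 0 ≤ lθ k) ∧ (∀ k i, 0 ≤ μ k i) ∧
    (∀ k i, 0 ≤ lH' k i) ∧
    Tendsto x atTop (𝓝 xb) ∧ Tendsto y atTop (𝓝 yb) ∧
    Tendsto (fun k => gradLx f g h (x k) (lg k) (lh k)
        + ∑ i, (lξ k i * y k i) • EuclideanSpace.single i 1) atTop (𝓝 0) ∧
    Tendsto (fun k i => -(lθ k) - μ k i + lH' k i + lξ k i * x k i)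
      atTop (𝓝 (0 : Fin n → ℝ)) ∧
    (∀ i, Tendsto (fun k => lg k i * g (x k) i) atTop (𝓝 0)) ∧
    (∀ j, Tendsto (fun k => lh k j * h (x k) j) atTop (𝓝 0)) ∧
    Tendsto (fun k => lθ k * theta α (y k)) atTop (𝓝 0) ∧
    (∀ i, Tendsto (fun k => μ k i * y k i) atTop (𝓝 0)) ∧
    (∀ i, Tendsto (fun k => lH' k i * (y k i - 1)) atTop (𝓝 0)) ∧
    (∀ i, Tendsto (fun k => lξ k i * (x k i * y k i)) atTop (𝓝 0))


private lemma tendsto_of_mul_left' {u v : ℕ → ℝ} {u0 : ℝ}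
    (hu : Tendsto u atTop (𝓝 u0)) (h0 : u0 ≠ 0)
    (huv : Tendsto (fun k => u k * v k) atTop (𝓝 0)) :
    Tendsto v atTop (𝓝 0) := by
  have h := huv.div hu h0
  rw [zero_div] at h
  refine h.congr' ?_
  filter_upwards [hu.eventually_ne h0] with k hk
  rw [Pi.div_apply]
  field_simp

private lemma min_lemma1' {a b : ℕ → ℝ} {b0 : ℝ} (ha : ∀ k, 0 ≤ a k)
    (hb : Tendsto b atTop (𝓝 b0)) (hb0 : b0 ≤ 0)
    (hab : Tendsto (fun k => a k * b k) atTop (𝓝 0)) :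
    Tendsto (fun k => min (-(b k)) (a k)) atTop (𝓝 0) := by
  rcases eq_or_lt_of_le hb0 with h0 | h0
  · have hbd : ∀ k, ‖min (-(b k)) (a k)‖ ≤ |b k| := by
      intro k
      rcases le_total (-(b k)) (a k) with h | h
      · rw [min_eq_left h]; simp [Real.norm_eq_abs, abs_neg]
      · rw [min_eq_right h, Real.norm_eq_abs, abs_of_nonneg (ha k)]
        exact h.trans (neg_le_abs _)
    have hb' : Tendsto (fun k => |b k|) atTop (𝓝 0) := by
      have := hb.abs; rw [h0, abs_zero] at this; exact this
    exact squeeze_zero_norm hbd hb'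
  · have ha0 : Tendsto a atTop (𝓝 0) := by
      refine tendsto_of_mul_left' hb (ne_of_lt h0) ?_
      simpa [mul_comm] using hab
    have := (hb.neg.min ha0)
    rw [min_eq_right (by linarith : (0:ℝ) ≤ -b0)] at this
    exact this

private lemma min_lemma2' {u v : ℕ → ℝ} {u0 : ℝ}
    (hu : Tendsto u atTop (𝓝 u0))
    (huv : Tendsto (fun k => u k * v k) atTop (𝓝 0)) :
    Tendsto (fun k => min |u k| |v k|) atTop (𝓝 0) := by
  by_cases h0 : u0 = 0
  · subst h0
    refine squeeze_zero (fun k => le_min (abs_nonneg _) (abs_nonneg _))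
      (fun k => min_le_left _ _) ?_
    have := hu.abs; rwa [abs_zero] at this
  · have hv : Tendsto v atTop (𝓝 0) := tendsto_of_mul_left' hu h0 huv
    refine squeeze_zero (fun k => le_min (abs_nonneg _) (abs_nonneg _))
      (fun k => min_le_right _ _) ?_
    have := hv.abs; rwa [abs_zero] at this

private lemma min_lemma3' {u v : ℕ → ℝ} {u0 : ℝ}
    (hu : Tendsto u atTop (𝓝 u0)) (hu0 : 0 ≤ u0)
    (huv : Tendsto (fun k => u k * v k) atTop (𝓝 0)) :
    Tendsto (fun k => min (u k) |v k|) atTop (𝓝 0) := by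
  rcases eq_or_lt_of_le hu0 with h0 | h0
  · have hbd : ∀ k, ‖min (u k) |v k|‖ ≤ |u k| := by
      intro k
      rw [Real.norm_eq_abs, abs_le]
      constructor
      · have h2 : -(|u k|) ≤ min (u k) 0 := by
          rcases le_total (u k) 0 with h | h
          · rw [min_eq_left h]; linarith [neg_abs_le (u k)]
          · rw [min_eq_right h]; linarith [abs_nonneg (u k)]
        exact h2.trans (min_le_min_left _ (abs_nonneg _))
      · exact (min_le_left _ _).trans (le_abs_self _)
    have hb' : Tendsto (fun k => |u k|) atTop (𝓝 0) := by
      have := hu.abs; rw [← h0, abs_zero] at this; exact this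
    exact squeeze_zero_norm hbd hb'
  · have hv : Tendsto v atTop (𝓝 0) := tendsto_of_mul_left' hu (ne_of_gt h0) huv
    have := hu.min hv.abs
    rw [abs_zero, min_eq_right h0.le] at this
    exact this

private lemma sum_single_eq' {n : ℕ} (c : Fin n → ℝ) :
    ∑ i, c i • EuclideanSpace.single i (1:ℝ) = (WithLp.equiv 2 (Fin n → ℝ)).symm c := by
  ext j
  calc (∑ i, c i • EuclideanSpace.single i (1:ℝ)) j
      = EuclideanSpace.proj j (∑ i, c i • EuclideanSpace.single i (1:ℝ)) := rfl
    _ = ∑ i, EuclideanSpace.proj j (c i • EuclideanSpace.single i (1:ℝ)) := map_sum _ _ _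
    _ = c j := by simp [EuclideanSpace.single_apply]
    _ = (WithLp.equiv 2 (Fin n → ℝ)).symm c j := rfl

/-- Theorem 4.3 of the paper. If `(x̄,ȳ)` is a CAKKT point
of the relaxed MPCaC problem viewed as a standard NLP, then `(x̄,ȳ)` is
`AW`-stationary. -/
theorem CAKKT_implies_AWStat {n m p : ℕ}
    (f : E n → ℝ) (g : E n → Fin m → ℝ) (h : E n → Fin p → ℝ) (α : ℕ)
    (hf : ContDiff ℝ 1 f) (hg : ∀ i, ContDiff ℝ 1 (fun x => g x i))
    (hh : ∀ j, ContDiff ℝ 1 (fun x => h x j)) (hα : 0 < α) (hαn : α < n)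
    (xb yb : E n) (hfeas : relFeas g h α xb yb)
    (hca : CAKKTrelaxed f g h α xb yb) :
    AWStat f g h α xb yb := by
  obtain ⟨x, y, lg, lh, lθ, μ, lH', lξ, hlg0, hlθ0, hμ0, hlH'0, hx, hy, hgrad, hpi,
    hgg, hhh, hθθ, hμy, hH'y, hξxy⟩ := hca
  obtain ⟨hgfeas, hhfeas, hθfeas, hxyfeas, hybd⟩ := hfeas
  have hxc : ∀ i, Tendsto (fun k => x k i) atTop (𝓝 (xb i)) := fun i =>
    ((EuclideanSpace.proj (𝕜 := ℝ) i).continuous.tendsto xb).comp hx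
  have hyc : ∀ i, Tendsto (fun k => y k i) atTop (𝓝 (yb i)) := fun i =>
    ((EuclideanSpace.proj (𝕜 := ℝ) i).continuous.tendsto yb).comp hy
  refine ⟨x, y, lg, lh, lθ,
    fun k => (WithLp.equiv 2 (Fin n → ℝ)).symm (fun i => lξ k i * y k i),
    fun k i => μ k i - lξ k i * x k i, lH',
    hlg0, hlθ0, hlH'0, hx, hy, ?_, ?_, ?_, ?_, ?_, ?_, ?_⟩
  · exact hgrad.congr (fun k => by rw [sum_single_eq' (fun i => lξ k i * y k i)])
  · exact hpi.congr (fun k => funext fun i => by ring)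
  · intro i
    exact min_lemma1' (fun k => hlg0 k i)
      (((hg i).continuous.tendsto xb).comp hx) (hgfeas i) (hgg i)
  · have hθc : Tendsto (fun k => theta α (y k)) atTop (𝓝 (theta α yb)) := by
      simp only [theta]
      exact tendsto_const_nhds.sub (tendsto_finset_sum _ fun i _ => hyc i)
    exact min_lemma1' (fun k => hlθ0 k) hθc hθfeas hθθ
  · intro i
    exact min_lemma2' (hxc i) ((hξxy i).congr (fun k => by
      show lξ k i * (x k i * y k i) = x k i * (lξ k i * y k i); ring))
  · intro i
    have h1 : Tendsto (fun k => μ k i * y k i - lξ k i * (x k i * y k i)) atTop (𝓝 0) := by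
      simpa using (hμy i).sub (hξxy i)
    exact min_lemma3' (hyc i) (hybd i).1 (h1.congr (fun k => by ring))
  · intro i
    have h1 := min_lemma1' (fun k => hlH'0 k i) ((hyc i).sub_const 1)
      (by linarith [(hybd i).2]) (hH'y i)
    exact h1.congr (fun k => by rw [neg_sub])
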